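/- Let F : [0,1] → [0,1] be continuously differentiable and nondecreasing with F(1) = 1 and F(t) < 1 for all t ∈ [0,1). For k ∈ [0,1) define x(k) = k + (∫ₖ¹ (1−F(s)) ds)/(1−F(k)), and set x(1) = 1. Then ∫₀¹ x(k)·F′(k) dk = ∫₀¹ (1−F(k))·(1 − log(1−F(k)) + log(1−F(0))) dk. (This is the change-of-variable identity expressing the mean of the induced signal distribution in terms of the virtual value distribution F.) -/

import Mathlib

open Set MeasureTheory Filter Topology


/-- change-of-variable identity for the mean.  With `F` a C¹
nondecreasing virtual-value CDF on `[0,1]`, `F(1) = 1`, `F < 1` on `[0,1)`, and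
`x(k) = k + (∫ₖ¹ (1−F))/(1−F(k))`,
`∫₀¹ x(k) F′(k) dk = ∫₀¹ (1−F(k))(1 − log(1−F(k)) + log(1−F(0))) dk`.
(The value `x(1)`, a single point, does not affect the integral; in Lean the
formula gives `x(1) = 1 + 0/0·… = 1 + 0 = 1` anyway since division by zero is
zero.) -/
theorem stmt16 (F F' : ℝ → ℝ)
    (hderiv : ∀ t ∈ Set.Icc (0:ℝ) 1, HasDerivWithinAt F (F' t) (Set.Icc (0:ℝ) 1) t)
    (hF'cont : ContinuousOn F' (Set.Icc (0:ℝ) 1))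
    (hmono : MonotoneOn F (Set.Icc (0:ℝ) 1))
    (hrange : ∀ t ∈ Set.Icc (0:ℝ) 1, F t ∈ Set.Icc (0:ℝ) 1)
    (hone : F 1 = 1)
    (hlt : ∀ t ∈ Set.Ico (0:ℝ) 1, F t < 1) :
    (∫ k in (0:ℝ)..1,
        (k + (∫ s in k..(1:ℝ), (1 - F s)) / (1 - F k)) * F' k) =
      ∫ k in (0:ℝ)..1,
        (1 - F k) * (1 - Real.log (1 - F k) + Real.log (1 - F 0)) := by

  have hFc : ContinuousOn F (Set.Icc 0 1) := fun t ht => (hderiv t ht).continuousWithinAt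
  suffices h : ∀ G : ℝ → ℝ, G = (fun t => 1 - F t) →
      (∫ k in (0:ℝ)..1, (k + (∫ s in k..(1:ℝ), G s) / G k) * F' k) =
        ∫ k in (0:ℝ)..1, G k * (1 - Real.log (G k) + Real.log (G 0)) by
    simpa using h (fun t => 1 - F t) rfl
  intro G hG
  have hGc : ContinuousOn G (Icc 0 1) := by rw [hG]; exact continuousOn_const.sub hFc
  have hGnn : ∀ t ∈ Icc (0:ℝ) 1, 0 ≤ G t := by
    intro t ht; rw [hG]; have := (hrange t ht).2; dsimp only; linarith
  have hGle1 : ∀ t ∈ Icc (0:ℝ) 1, G t ≤ 1 := by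
    intro t ht; rw [hG]; have := (hrange t ht).1; dsimp only; linarith
  have hGpos : ∀ t ∈ Ico (0:ℝ) 1, 0 < G t := by
    intro t ht; rw [hG]; have := hlt t ht; dsimp only; linarith
  have hG1 : G 1 = 0 := by rw [hG]; simp [hone]
  have hGAt : ∀ x ∈ Ioo (0:ℝ) 1, HasDerivAt G (-(F' x)) x := by
    intro x hx
    have h1 : HasDerivAt F (F' x) x :=
      (hderiv x (Ioo_subset_Icc_self hx)).hasDerivAt (Icc_mem_nhds hx.1 hx.2)
    rw [hG]; simpa using (h1.const_sub 1)
  set c : ℝ := Real.log (G 0) with hc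
  set I : ℝ → ℝ := fun k => ∫ s in k..(1:ℝ), G s with hI
  have hGIOn : IntegrableOn G (Icc (0:ℝ) 1) volume := hGc.integrableOn_Icc
  have hGint : ∀ a b, a ∈ Icc (0:ℝ) 1 → b ∈ Icc (0:ℝ) 1 → IntervalIntegrable G volume a b :=
    fun a b ha hb => (hGc.mono (uIcc_subset_Icc ha hb)).intervalIntegrable
  have hIcont : ContinuousOn I (Icc 0 1) := by
    have := intervalIntegral.continuousOn_primitive_interval_left (μ := volume) (f := G)
      (a := (0:ℝ)) (b := (1:ℝ)) (by rwa [uIcc_of_le zero_le_one])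
    rwa [uIcc_of_le zero_le_one] at this
  have hI1 : I 1 = 0 := by rw [hI]; simp
  have hIAt : ∀ x ∈ Ioo (0:ℝ) 1, HasDerivAt I (-(G x)) x := by
    intro x hx
    exact intervalIntegral.integral_hasDerivAt_left
      (hGint x 1 (Ioo_subset_Icc_self hx) (right_mem_Icc.2 zero_le_one))
      (ContinuousOn.stronglyMeasurableAtFilter isOpen_Ioo (hGc.mono Ioo_subset_Icc_self) x hx)
      (hGc.continuousAt (Icc_mem_nhds hx.1 hx.2))
  have hInn : ∀ k ∈ Icc (0:ℝ) 1, 0 ≤ I k := by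
    intro k hk
    exact intervalIntegral.integral_nonneg hk.2
      (fun u hu => hGnn u ⟨le_trans hk.1 hu.1, hu.2⟩)
  have hIle : ∀ k ∈ Icc (0:ℝ) 1, I k ≤ (1 - k) * G k := by
    intro k hk
    have h1 : I k ≤ ∫ _ in k..(1:ℝ), G k := by
      apply intervalIntegral.integral_mono_on hk.2
        (hGint k 1 hk (right_mem_Icc.2 zero_le_one)) intervalIntegrable_const
      intro x hx
      rw [hG]; dsimp only
      have := hmono hk (⟨le_trans hk.1 hx.1, hx.2⟩ : x ∈ Icc (0:ℝ) 1) hx.1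
      linarith
    simpa using h1
  have hratio : ∀ k ∈ Icc (0:ℝ) 1, 0 ≤ I k / G k ∧ I k / G k ≤ 1 - k := by
    intro k hk
    rcases eq_or_lt_of_le hk.2 with h1 | h1
    · constructor <;> simp [h1, hI1]
    · have hGk := hGpos k ⟨hk.1, h1⟩
      exact ⟨div_nonneg (hInn k hk) hGk.le, (div_le_iff₀ hGk).2 (hIle k hk)⟩
  set f₁ : ℝ → ℝ := fun k => (k + I k / G k) * F' k with hf₁
  set f₂ : ℝ → ℝ := fun k => G k * (1 - Real.log (G k) + c) with hf₂
  have hrlim : Tendsto (fun k => I k / G k) (𝓝[Icc (0:ℝ) 1] 1) (𝓝 0) := by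
    apply tendsto_of_tendsto_of_tendsto_of_le_of_le' (g := fun _ => (0:ℝ))
      (h := fun k => 1 - k) tendsto_const_nhds
    · have : Tendsto (fun k : ℝ => 1 - k) (𝓝[Icc (0:ℝ) 1] 1) (𝓝 (1 - 1)) :=
        ((continuous_const.sub continuous_id).tendsto 1).mono_left nhdsWithin_le_nhds
      simpa using this
    · exact eventually_mem_nhdsWithin.mono (fun k hk => (hratio k hk).1)
    · exact eventually_mem_nhdsWithin.mono (fun k hk => (hratio k hk).2)
  have hf₁c : ContinuousOn f₁ (Icc 0 1) := by
    intro k hk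
    rcases eq_or_lt_of_le hk.2 with h1 | h1
    · subst h1
      have h2 : Tendsto f₁ (𝓝[Icc (0:ℝ) 1] 1) (𝓝 ((1 + 0) * F' 1)) :=
        ((tendsto_id.mono_left nhdsWithin_le_nhds).add hrlim).mul (hF'cont 1 hk)
      have h3 : f₁ 1 = (1 + 0) * F' 1 := by rw [hf₁]; simp [hI1]
      show Tendsto f₁ (𝓝[Icc (0:ℝ) 1] 1) (𝓝 (f₁ 1))
      rw [h3]; exact h2
    · exact (continuousWithinAt_id.add ((hIcont k hk).div (hGc k hk)
        (hGpos k ⟨hk.1, h1⟩).ne')).mul (hF'cont k hk)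
  have hf₂c : ContinuousOn f₂ (Icc 0 1) := by
    have hml : ContinuousOn (fun k => G k * Real.log (G k)) (Icc (0:ℝ) 1) :=
      Real.continuous_mul_log.comp_continuousOn hGc
    have h1 : ContinuousOn (fun k => G k * (1 + c) - G k * Real.log (G k)) (Icc (0:ℝ) 1) :=
      (hGc.mul continuousOn_const).sub hml
    exact h1.congr (fun x _ => by rw [hf₂]; ring)
  have hP₁ : ContinuousOn (fun b => ∫ k in (0:ℝ)..b, f₁ k) (Icc 0 1) := by
    have := intervalIntegral.continuousOn_primitive_interval (μ := volume) (f := f₁)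
      (a := (0:ℝ)) (b := (1:ℝ)) (by rw [uIcc_of_le zero_le_one]; exact hf₁c.integrableOn_Icc)
    rwa [uIcc_of_le zero_le_one] at this
  have hP₂ : ContinuousOn (fun b => ∫ k in (0:ℝ)..b, f₂ k) (Icc 0 1) := by
    have := intervalIntegral.continuousOn_primitive_interval (μ := volume) (f := f₂)
      (a := (0:ℝ)) (b := (1:ℝ)) (by rw [uIcc_of_le zero_le_one]; exact hf₂c.integrableOn_Icc)
    rwa [uIcc_of_le zero_le_one] at this
  -- key identity on [0, b]
  have hkey : ∀ b ∈ Ioo (0:ℝ) 1,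
      (∫ k in (0:ℝ)..b, f₁ k) - (∫ k in (0:ℝ)..b, f₂ k)
        = -(b * G b) - I b * Real.log (G b) + I b * c := by
    intro b hb
    have hsub : Icc (0:ℝ) b ⊆ Icc 0 1 := Icc_subset_Icc le_rfl hb.2.le
    have hmemIco : ∀ x ∈ Icc (0:ℝ) b, x ∈ Ico (0:ℝ) 1 :=
      fun x hx => ⟨hx.1, lt_of_le_of_lt hx.2 hb.2⟩
    set Ψ : ℝ → ℝ := fun k => -(k * G k) - I k * Real.log (G k) + I k * c with hΨ
    have hΨ0 : Ψ 0 = 0 := by rw [hΨ]; simp [hc]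
    have hΨc : ContinuousOn Ψ (Icc 0 b) := by
      refine (((continuousOn_id.mul (hGc.mono hsub)).neg).sub
        ((hIcont.mono hsub).mul ((hGc.mono hsub).log ?_))).add
        ((hIcont.mono hsub).mul continuousOn_const)
      exact fun x hx => (hGpos x (hmemIco x hx)).ne'
    have hΨd : ∀ x ∈ Ioo (0:ℝ) b, HasDerivWithinAt Ψ (f₁ x - f₂ x) (Ioi x) x := by
      intro x hx
      have hx1 : x ∈ Ioo (0:ℝ) 1 := ⟨hx.1, hx.2.trans hb.2⟩
      have hGx : G x ≠ 0 := (hGpos x ⟨hx1.1.le, hx1.2⟩).ne'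
      have hd1 : HasDerivAt (fun k => -(k * G k)) (-(1 * G x + x * -(F' x))) x :=
        ((hasDerivAt_id x).mul (hGAt x hx1)).neg
      have hd2 : HasDerivAt (fun k => I k * Real.log (G k))
          (-(G x) * Real.log (G x) + I x * (-(F' x) / G x)) x :=
        (hIAt x hx1).mul ((hGAt x hx1).log hGx)
      have hd3 : HasDerivAt (fun k => I k * c) (-(G x) * c) x := (hIAt x hx1).mul_const c
      have hD : HasDerivAt Ψ
          ((-(1 * G x + x * -(F' x)) - (-(G x) * Real.log (G x) + I x * (-(F' x) / G x)))
            + -(G x) * c) x := (hd1.sub hd2).add hd3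
      have heq : (-(1 * G x + x * -(F' x)) - (-(G x) * Real.log (G x) + I x * (-(F' x) / G x)))
            + -(G x) * c = f₁ x - f₂ x := by
        rw [hf₁, hf₂]; field_simp; ring
      rw [heq] at hD
      exact hD.hasDerivWithinAt
    have hint₁ : IntervalIntegrable f₁ volume 0 b := by
      apply ContinuousOn.intervalIntegrable
      rw [uIcc_of_le hb.1.le]; exact hf₁c.mono hsub
    have hint₂ : IntervalIntegrable f₂ volume 0 b := by
      apply ContinuousOn.intervalIntegrable
      rw [uIcc_of_le hb.1.le]; exact hf₂c.mono hsub
    have hFTC := intervalIntegral.integral_eq_sub_of_hasDeriv_right_of_le hb.1.le hΨc hΨd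
      (hint₁.sub hint₂)
    rw [intervalIntegral.integral_sub hint₁ hint₂, hΨ0, sub_zero] at hFTC
    rw [hFTC, hΨ]
  -- limits as b → 1⁻
  have hl : (𝓝[Ioo (0:ℝ) 1] (1:ℝ)).NeBot := right_nhdsWithin_Ioo_neBot zero_lt_one
  have hmono' : 𝓝[Ioo (0:ℝ) 1] (1:ℝ) ≤ 𝓝[Icc (0:ℝ) 1] (1:ℝ) :=
    nhdsWithin_mono _ Ioo_subset_Icc_self
  have h1mem : (1:ℝ) ∈ Icc (0:ℝ) 1 := right_mem_Icc.2 zero_le_one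
  have TG : Tendsto G (𝓝[Ioo (0:ℝ) 1] 1) (𝓝 0) := by
    have := (hGc 1 h1mem).mono_left hmono'
    rwa [hG1] at this
  have TI : Tendsto I (𝓝[Ioo (0:ℝ) 1] 1) (𝓝 0) := by
    have := (hIcont 1 h1mem).mono_left hmono'
    rwa [hI1] at this
  have Tb : Tendsto (fun b : ℝ => b) (𝓝[Ioo (0:ℝ) 1] 1) (𝓝 1) :=
    tendsto_id.mono_left nhdsWithin_le_nhds
  have TGL : Tendsto (fun b => G b * Real.log (G b)) (𝓝[Ioo (0:ℝ) 1] 1) (𝓝 0) := by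
    have := (Real.continuous_mul_log.tendsto 0).comp TG
    simpa [Function.comp_def] using this
  have T3 : Tendsto (fun b => I b * Real.log (G b)) (𝓝[Ioo (0:ℝ) 1] 1) (𝓝 0) := by
    apply tendsto_of_tendsto_of_tendsto_of_le_of_le'
      (g := fun b => (1 - b) * (G b * Real.log (G b))) (h := fun _ => (0:ℝ))
    · have := ((tendsto_const_nhds (x := (1:ℝ))).sub Tb).mul TGL
      simpa using this
    · exact tendsto_const_nhds
    · refine eventually_mem_nhdsWithin.mono (fun b hb => ?_)
      have hbI : b ∈ Icc (0:ℝ) 1 := Ioo_subset_Icc_self hb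
      have hlog : Real.log (G b) ≤ 0 := Real.log_nonpos (hGnn b hbI) (hGle1 b hbI)
      have := mul_le_mul_of_nonpos_right (hIle b hbI) hlog
      calc (1 - b) * (G b * Real.log (G b)) = ((1 - b) * G b) * Real.log (G b) := by ring
        _ ≤ I b * Real.log (G b) := this
    · refine eventually_mem_nhdsWithin.mono (fun b hb => ?_)
      have hbI : b ∈ Icc (0:ℝ) 1 := Ioo_subset_Icc_self hb
      have hlog : Real.log (G b) ≤ 0 := Real.log_nonpos (hGnn b hbI) (hGle1 b hbI)
      have := mul_le_mul_of_nonneg_left hlog (hInn b hbI)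
      simpa using this
  have TΨ : Tendsto (fun b => -(b * G b) - I b * Real.log (G b) + I b * c)
      (𝓝[Ioo (0:ℝ) 1] 1) (𝓝 0) := by
    have h1 : Tendsto (fun b => -(b * G b)) (𝓝[Ioo (0:ℝ) 1] 1) (𝓝 0) := by
      simpa using (Tb.mul TG).neg
    have h2 : Tendsto (fun b => I b * c) (𝓝[Ioo (0:ℝ) 1] 1) (𝓝 0) := by
      simpa using TI.mul_const c
    have := (h1.sub T3).add h2
    simpa using this
  have Tdiff : Tendsto (fun b => (∫ k in (0:ℝ)..b, f₁ k) - ∫ k in (0:ℝ)..b, f₂ k)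
      (𝓝[Ioo (0:ℝ) 1] 1)
      (𝓝 ((∫ k in (0:ℝ)..1, f₁ k) - ∫ k in (0:ℝ)..1, f₂ k)) :=
    ((hP₁ 1 h1mem).mono_left hmono').sub ((hP₂ 1 h1mem).mono_left hmono')
  have Tdiff0 : Tendsto (fun b => (∫ k in (0:ℝ)..b, f₁ k) - ∫ k in (0:ℝ)..b, f₂ k)
      (𝓝[Ioo (0:ℝ) 1] 1) (𝓝 0) := by
    refine TΨ.congr' ?_
    exact eventually_mem_nhdsWithin.mono (fun b hb => (hkey b hb).symm)
  have hfin := tendsto_nhds_unique Tdiff Tdiff0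
  have hgoal : (∫ k in (0:ℝ)..1, f₁ k) = ∫ k in (0:ℝ)..1, f₂ k := by linarith
  rw [hf₁, hf₂] at hgoal
  simpa [hI, hc] using hgoal
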